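/- arXiv:1605.04638 — 2 statements merged into one kernel-verified Lean document; each statement's English description precedes it below -/
import Mathlib

section
/- Let Ω ⊆ ℝ^d be a convex set, η > 0, and let w_{t+1} = Π_Ω[w_t - η g_t] be the Euclidean projection of w_t - η g_t onto Ω. Suppose w_t*, w_{t+1}* ∈ Ω and ‖w_{t+1} - w_{t+1}*‖ ≤ r. Then g_t · (w_t - w_t*) ≤ (η/2)‖g_t‖² + (r/η)‖w_t* - w_{t+1}*‖ + (1/(2η))(‖w_t - w_t*‖² - ‖w_{t+1} - w_{t+1}*‖² - ‖w_t* - w_{t+1}*‖²). -/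
open scoped RealInnerProductSpace

/-- Lemma 1 of the paper: one-step OGD inequality. -/
theorem stmt0 {d : ℕ} (Ω : Set (EuclideanSpace ℝ (Fin d)))
    (hΩconv : Convex ℝ Ω) (hΩclosed : IsClosed Ω) (hΩne : Ω.Nonempty)
    (η r : ℝ) (hη : 0 < η)
    (wt wt1 wts wt1s g : EuclideanSpace ℝ (Fin d))
    (hwt : wt ∈ Ω) (hwt1 : wt1 ∈ Ω) (hwts : wts ∈ Ω) (hwt1s : wt1s ∈ Ω)
    (hproj : ∀ y ∈ Ω, ‖wt1 - y‖ ≤ ‖(wt - η • g) - y‖)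
    (hr : ‖wt1 - wt1s‖ ≤ r) :
    (inner ℝ g (wt - wts) : ℝ) ≤ η / 2 * ‖g‖ ^ 2 + r / η * ‖wts - wt1s‖
      + (1 / (2 * η)) * (‖wt - wts‖ ^ 2 - ‖wt1 - wt1s‖ ^ 2 - ‖wts - wt1s‖ ^ 2) := by
  have h1 : ‖wt1 - wts‖ ^ 2 ≤ ‖(wt - η • g) - wts‖ ^ 2 :=
    pow_le_pow_left₀ (norm_nonneg _) (hproj wts hwts) 2
  have h2 : ‖(wt - η • g) - wts‖ ^ 2
      = ‖wt - wts‖ ^ 2 - 2 * η * (inner ℝ g (wt - wts) : ℝ) + η ^ 2 * ‖g‖ ^ 2 := by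
    have : (wt - η • g) - wts = (wt - wts) - η • g := by abel
    rw [this, norm_sub_sq_real, real_inner_smul_right, real_inner_comm,
      norm_smul, Real.norm_eq_abs]
    have : |η| = η := abs_of_pos hη
    rw [this]; ring
  have h3 : ‖wt1 - wts‖ ^ 2
      = ‖wt1 - wt1s‖ ^ 2 + 2 * (inner ℝ (wt1 - wt1s) (wt1s - wts) : ℝ)
        + ‖wt1s - wts‖ ^ 2 := by
    have : wt1 - wts = (wt1 - wt1s) + (wt1s - wts) := by abel
    rw [this, norm_add_sq_real]
  have h4 : -(‖wt1 - wt1s‖ * ‖wt1s - wts‖) ≤ (inner ℝ (wt1 - wt1s) (wt1s - wts) : ℝ) :=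
    neg_le_of_abs_le (abs_real_inner_le_norm _ _)
  have h5 : ‖wt1s - wts‖ = ‖wts - wt1s‖ := norm_sub_rev _ _
  have hr0 : 0 ≤ ‖wts - wt1s‖ := norm_nonneg _
  have h6 : ‖wt1 - wt1s‖ * ‖wts - wt1s‖ ≤ r * ‖wts - wt1s‖ :=
    mul_le_mul_of_nonneg_right hr hr0
  have h2eta : (0:ℝ) < 2 * η := by linarith
  have key : 2 * η * (inner ℝ g (wt - wts) : ℝ)
      ≤ η ^ 2 * ‖g‖ ^ 2 + 2 * (r * ‖wts - wt1s‖)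
        + (‖wt - wts‖ ^ 2 - ‖wt1 - wt1s‖ ^ 2 - ‖wts - wt1s‖ ^ 2) := by
    rw [h5] at h3 h4
    linarith [h1, h2, h3, h4, h6]
  have goal' : (inner ℝ g (wt - wts) : ℝ)
      ≤ (η ^ 2 * ‖g‖ ^ 2 + 2 * (r * ‖wts - wt1s‖)
        + (‖wt - wts‖ ^ 2 - ‖wt1 - wt1s‖ ^ 2 - ‖wts - wt1s‖ ^ 2)) / (2 * η) :=
    (le_div_iff₀ h2eta).mpr (by linarith [key])
  calc (inner ℝ g (wt - wts) : ℝ) ≤ _ := goal'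
    _ = η / 2 * ‖g‖ ^ 2 + r / η * ‖wts - wt1s‖
      + (1 / (2 * η)) * (‖wt - wts‖ ^ 2 - ‖wt1 - wt1s‖ ^ 2 - ‖wts - wt1s‖ ^ 2) := by
      field_simp
end

section
/- Let Ω ⊆ ℝ^d be a nonempty closed convex set with the property that ‖w - w'‖ ≤ r for all w, w' ∈ Ω. Let f_1, ..., f_T : ℝ^d → ℝ be convex, differentiable, and L-smooth functions such that for each t there exists a minimizer w_t* ∈ Ω of f_t over Ω with ∇f_t(w_t*) = 0. Consider online gradient descent with constant step size η = 1/(2L): w_1 ∈ Ω arbitrary and w_{t+1} = Π_Ω[w_t - η ∇f_t(w_t)]. Then Σ_{t=1}^T (f_t(w_t) - f_t(w_t*)) ≤ 2L(r² + 2r·V_T^p), where V_T^p = Σ_{t=1}^{T-1} ‖w_t* - w_{t+1}*‖ is the path variation. -/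
open scoped RealInnerProductSpace

variable {E : Type*} [NormedAddCommGroup E] [InnerProductSpace ℝ E] [CompleteSpace E]

/-- Derivative of `f` along a line, from the gradient. -/
lemma gradLineDeriv {f : E → ℝ} {g : E} {x v : E} {τ : ℝ}
    (h : HasGradientAt f g (x + τ • v)) :
    HasDerivAt (fun s : ℝ => f (x + s • v)) ⟪g, v⟫ τ := by
  have hline : HasDerivAt (fun s : ℝ => x + s • v) v τ := by
    simpa using ((hasDerivAt_id τ).smul_const v).const_add x
  have := (h.hasFDerivAt.comp_hasDerivAt τ hline)
  simp at this; exact this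

/-- Convex differentiable: gradient inequality. -/
lemma convex_grad_ineq {f : E → ℝ} (hc : ConvexOn ℝ Set.univ f)
    {g x : E} (hg : HasGradientAt f g x) (y : E) :
    f x + ⟪g, y - x⟫ ≤ f y := by
  set v := y - x with hv
  have hφ : HasDerivAt (fun s : ℝ => f (x + s • v)) ⟪g, v⟫ 0 := by
    apply gradLineDeriv; simpa using hg
  rw [hasDerivAt_iff_tendsto_slope] at hφ
  have key : ∀ τ ∈ Set.Ioc (0:ℝ) 1, slope (fun s : ℝ => f (x + s • v)) 0 τ ≤ f y - f x := by
    intro τ hτ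
    have hτ0 : (0:ℝ) < τ := hτ.1
    have hxy : x + τ • v = (1 - τ) • x + τ • y := by
      rw [hv]; module
    have h1 : f (x + τ • v) ≤ (1 - τ) * f x + τ * f y := by
      rw [hxy]
      simpa using hc.2 (Set.mem_univ x) (Set.mem_univ y) (by linarith [hτ.2] : (0:ℝ) ≤ 1 - τ)
        (le_of_lt hτ0) (by ring : (1 - τ) + τ = 1)
    have h0 : x + (0:ℝ) • v = x := by simp
    rw [slope_def_field, h0, sub_zero, div_le_iff₀ hτ0]
    nlinarith [h1]
  have htend : Filter.Tendsto (slope (fun s : ℝ => f (x + s • v)) 0) (nhdsWithin 0 (Set.Ioi 0)) (nhds ⟪g, v⟫) :=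
    hφ.mono_left (nhdsWithin_mono _ (fun a ha => by simpa using ne_of_gt ha))
  have hle : ⟪g, v⟫ ≤ f y - f x := by
    refine le_of_tendsto htend ?_
    filter_upwards [Ioc_mem_nhdsGT_of_mem (Set.left_mem_Ico.2 one_pos)] with τ hτ
    exact key τ hτ
  linarith

/-- Descent lemma: quadratic upper bound for L-smooth functions. -/
lemma descent_lemma {f : E → ℝ} {g : E → E} (hg : ∀ x, HasGradientAt f (g x) x)
    {L : ℝ} (hlip : ∀ a b, ‖g a - g b‖ ≤ L * ‖a - b‖) (x z : E) :
    f z ≤ f x + ⟪g x, z - x⟫ + L / 2 * ‖z - x‖ ^ 2 := by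
  set v := z - x with hv
  set ψ : ℝ → ℝ := fun s => f (x + s • v) - s * ⟪g x, v⟫ - (L / 2 * ‖v‖ ^ 2) * s ^ 2 with hψdef
  have hψ : ∀ s : ℝ, HasDerivAt ψ
      (⟪g (x + s • v), v⟫ - ⟪g x, v⟫ - (L / 2 * ‖v‖ ^ 2) * (2 * s)) s := by
    intro s
    have h1 : HasDerivAt (fun s : ℝ => f (x + s • v)) ⟪g (x + s • v), v⟫ s :=
      gradLineDeriv (hg _)
    have h2 : HasDerivAt (fun s : ℝ => s * ⟪g x, v⟫) ⟪g x, v⟫ s := by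
      simpa using (hasDerivAt_id s).mul_const ⟪g x, v⟫
    have h3 : HasDerivAt (fun s : ℝ => (L / 2 * ‖v‖ ^ 2) * s ^ 2)
        ((L / 2 * ‖v‖ ^ 2) * (2 * s)) s := by
      have := (hasDerivAt_pow 2 s).const_mul (L / 2 * ‖v‖ ^ 2)
      exact this.congr_deriv (by norm_num)
    exact (h1.sub h2).sub h3
  have hanti : AntitoneOn ψ (Set.Icc 0 1) := by
    apply antitoneOn_of_deriv_nonpos (convex_Icc 0 1)
    · exact (fun s _ => ((hψ s).differentiableAt).continuousAt.continuousWithinAt)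
    · exact fun s _ => ((hψ s).differentiableAt).differentiableWithinAt
    · intro s hs
      rw [interior_Icc] at hs
      rw [(hψ s).deriv]
      have hineq : ⟪g (x + s • v) - g x, v⟫ ≤ L * s * ‖v‖ ^ 2 := by
        calc ⟪g (x + s • v) - g x, v⟫ ≤ ‖g (x + s • v) - g x‖ * ‖v‖ :=
              real_inner_le_norm _ _
          _ ≤ (L * ‖(x + s • v) - x‖) * ‖v‖ := by
              have := hlip (x + s • v) x
              have hnn : (0:ℝ) ≤ ‖v‖ := norm_nonneg _
              nlinarith [this]
          _ = L * s * ‖v‖ ^ 2 := by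
              rw [add_sub_cancel_left, norm_smul, Real.norm_eq_abs,
                abs_of_pos hs.1]; ring
      rw [inner_sub_left] at hineq
      nlinarith [hineq]
  have h01 : ψ 1 ≤ ψ 0 :=
    hanti (Set.mem_Icc.2 ⟨le_refl 0, zero_le_one⟩) (Set.mem_Icc.2 ⟨zero_le_one, le_refl 1⟩)
      zero_le_one
  have e0 : ψ 0 = f x := by simp [hψdef]
  have e1 : ψ 1 = f z - ⟪g x, v⟫ - L / 2 * ‖v‖ ^ 2 := by
    simp [hψdef, hv]
  rw [e0, e1] at h01
  linarith

lemma step_bound {f : E → ℝ} {g : E → E} {L : ℝ} (hL : 0 < L)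
    (hg : ∀ p, HasGradientAt f (g p) p) (hc : ConvexOn ℝ Set.univ f)
    (hlip : ∀ a b, ‖g a - g b‖ ≤ L * ‖a - b‖)
    {Ω : Set E} (hΩconv : Convex ℝ Ω) {u x y : E} (hu : u ∈ Ω) (hy : y ∈ Ω)
    (hgu : g u = 0)
    (hproj : ∀ q ∈ Ω, ‖y - (x - (1 / (2 * L)) • g x)‖ ≤ ‖q - (x - (1 / (2 * L)) • g x)‖) :
    f x - f u ≤ 2 * L * (‖x - u‖ ^ 2 - ‖y - u‖ ^ 2) := by
  set η : ℝ := 1 / (2 * L) with hη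
  have hηpos : 0 < η := by positivity
  set p : E := x - η • g x with hp
  -- (1) convexity inequality
  have h1 : f x - f u ≤ ⟪g x, x - u⟫ := by
    have := convex_grad_ineq hc (hg x) u
    have hi : ⟪g x, u - x⟫ = -⟪g x, x - u⟫ := by
      rw [← inner_neg_right]; congr 1; abel
    linarith [this, hi.le, hi.ge]
  -- (2) gradient norm bound via descent lemma
  have h2 : ‖g x‖ ^ 2 ≤ 2 * L * (f x - f u) := by
    set z : E := x - (1 / L) • g x with hz
    have hd := descent_lemma hg hlip x z
    have hzx : z - x = -((1 / L) • g x) := by rw [hz]; abel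
    have hinner : ⟪g x, z - x⟫ = -(1 / L) * ‖g x‖ ^ 2 := by
      rw [hzx, inner_neg_right, real_inner_smul_right, real_inner_self_eq_norm_sq]; ring
    have hnorm : ‖z - x‖ ^ 2 = (1 / L) ^ 2 * ‖g x‖ ^ 2 := by
      rw [hzx, norm_neg, norm_smul, mul_pow, Real.norm_eq_abs, sq_abs]
    have hmin : f u ≤ f z := by
      have := convex_grad_ineq hc (hg u) z
      rw [hgu] at this; simpa using this
    rw [hinner, hnorm] at hd
    have hL' : L ≠ 0 := ne_of_gt hL
    have e : -(1 / L) * ‖g x‖ ^ 2 + L / 2 * ((1 / L) ^ 2 * ‖g x‖ ^ 2)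
        = -(‖g x‖ ^ 2 / (2 * L)) := by
      field_simp; ring
    have h5 : ‖g x‖ ^ 2 / (2 * L) ≤ f x - f u := by linarith
    have := (div_le_iff₀ (by positivity : (0:ℝ) < 2 * L)).1 h5
    linarith
  -- (3) projection inequality
  have h3 : ‖y - u‖ ^ 2 ≤ ‖p - u‖ ^ 2 := by
    have hinf : ‖p - y‖ = ⨅ w : Ω, ‖p - w‖ := by
      have hne : Nonempty Ω := ⟨⟨u, hu⟩⟩
      apply le_antisymm
      · apply le_ciInf
        intro ⟨q, hq⟩
        rw [norm_sub_rev p y, norm_sub_rev p q]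
        exact hproj q hq
      · exact ciInf_le ⟨0, fun _ ⟨_, h⟩ => h ▸ norm_nonneg _⟩ (⟨y, hy⟩ : Ω)
    have hvi := (norm_eq_iInf_iff_real_inner_le_zero hΩconv hy).1 hinf u hu
    have hexp := norm_add_sq_real (p - y) (y - u)
    have hsum : (p - y) + (y - u) = p - u := by abel
    rw [hsum] at hexp
    have hflip : ⟪p - y, y - u⟫ = -⟪p - y, u - y⟫ := by
      rw [← inner_neg_right]; congr 1; abel
    nlinarith [hexp, hvi, hflip.le, hflip.ge, sq_nonneg ‖p - y‖]
  -- (4) expand ‖p - u‖²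
  have h4 : ‖p - u‖ ^ 2 = ‖x - u‖ ^ 2 - 2 * η * ⟪g x, x - u⟫ + η ^ 2 * ‖g x‖ ^ 2 := by
    have hpu : p - u = (x - u) - η • g x := by rw [hp]; abel
    rw [hpu, norm_sub_sq_real, real_inner_smul_right, norm_smul, Real.norm_eq_abs,
      abs_of_pos hηpos, mul_pow, real_inner_comm]
    ring
  -- combine
  have hη2 : 2 * L * η = 1 := by rw [hη]; field_simp
  set D := f x - f u with hD
  have e1 : η ^ 2 * ‖g x‖ ^ 2 ≤ η * D := by
    have := mul_le_mul_of_nonneg_left h2 (sq_nonneg η)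
    calc η ^ 2 * ‖g x‖ ^ 2 ≤ η ^ 2 * (2 * L * D) := this
      _ = (2 * L * η) * (η * D) := by ring
      _ = η * D := by rw [hη2]; ring
  have e2 : 2 * η * D ≤ 2 * η * ⟪g x, x - u⟫ :=
    mul_le_mul_of_nonneg_left h1 (by positivity)
  have e3 : η * D ≤ ‖x - u‖ ^ 2 - ‖y - u‖ ^ 2 := by linarith
  have e4 := mul_le_mul_of_nonneg_left e3 (by positivity : (0:ℝ) ≤ 2 * L)
  calc D = (2 * L * η) * D := by rw [hη2]; ring
    _ = 2 * L * (η * D) := by ring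
    _ ≤ 2 * L * (‖x - u‖ ^ 2 - ‖y - u‖ ^ 2) := e4

lemma abel_shift (b c : ℕ → ℝ) : ∀ n : ℕ, 1 ≤ n →
    ∑ t ∈ Finset.Icc 1 n, (b t - c t)
      = b 1 - c n + ∑ t ∈ Finset.Icc 1 (n - 1), (b (t + 1) - c t) := by
  intro n hn
  induction n, hn using Nat.le_induction with
  | base => simp
  | succ n hn ih =>
    have h : ∑ t ∈ Finset.Icc 1 n, (b (t + 1) - c t)
        = ∑ t ∈ Finset.Icc 1 (n - 1), (b (t + 1) - c t) + (b (n + 1) - c n) := by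
      conv_lhs => rw [show n = (n - 1) + 1 by omega]
      rw [Finset.sum_Icc_succ_top (by omega : 1 ≤ n - 1 + 1)]
      rw [show n - 1 + 1 = n by omega]
    rw [Finset.sum_Icc_succ_top (by omega : 1 ≤ n + 1), ih, Nat.add_sub_cancel, h]
    ring

open Finset

/-- Theorem 1 (upper bound): OGD with step size `1/(2L)` on convex `L`-smooth losses
with vanishing gradients achieves dynamic regret at most `2L(r² + 2r·V_T^p)`. -/
theorem stmt3 {d : ℕ} (Ω : Set (EuclideanSpace ℝ (Fin d)))
    (hΩconv : Convex ℝ Ω) (hΩclosed : IsClosed Ω) (hΩne : Ω.Nonempty)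
    (r L : ℝ) (hL : 0 < L) (hr : 0 ≤ r)
    (hdiam : ∀ w ∈ Ω, ∀ w' ∈ Ω, ‖w - w'‖ ≤ r)
    (T : ℕ)
    (f : ℕ → EuclideanSpace ℝ (Fin d) → ℝ)
    (f' : ℕ → EuclideanSpace ℝ (Fin d) → EuclideanSpace ℝ (Fin d))
    (w ws : ℕ → EuclideanSpace ℝ (Fin d))
    (hgrad : ∀ t ∈ Finset.Icc 1 T, ∀ x, HasGradientAt (f t) (f' t x) x)
    (hconv : ∀ t ∈ Finset.Icc 1 T, ConvexOn ℝ Set.univ (f t))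
    (hsmooth : ∀ t ∈ Finset.Icc 1 T, ∀ x y, ‖f' t x - f' t y‖ ≤ L * ‖x - y‖)
    (hwsΩ : ∀ t ∈ Finset.Icc 1 T, ws t ∈ Ω)
    (hmin : ∀ t ∈ Finset.Icc 1 T, ∀ y ∈ Ω, f t (ws t) ≤ f t y)
    (hvanish : ∀ t ∈ Finset.Icc 1 T, f' t (ws t) = 0)
    (hw1 : w 1 ∈ Ω)
    (hprojmem : ∀ t ∈ Finset.Icc 1 T, w (t + 1) ∈ Ω)
    (hproj : ∀ t ∈ Finset.Icc 1 T, ∀ y ∈ Ω,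
      ‖w (t + 1) - (w t - (1 / (2 * L)) • f' t (w t))‖
        ≤ ‖y - (w t - (1 / (2 * L)) • f' t (w t))‖) :
    ∑ t ∈ Finset.Icc 1 T, (f t (w t) - f t (ws t))
      ≤ 2 * L * (r ^ 2 + 2 * r * ∑ t ∈ Finset.Icc 1 (T - 1), ‖ws t - ws (t + 1)‖) := by
  rcases Nat.eq_zero_or_pos T with hT | hT
  · subst hT
    simp only [show (0:ℕ) - 1 = 0 from rfl, Finset.Icc_self]
    simp only [show Finset.Icc 1 0 = (∅ : Finset ℕ) by simp, Finset.sum_empty]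
    positivity
  -- abbreviations
  set b : ℕ → ℝ := fun t => ‖w t - ws t‖ ^ 2 with hb
  set c : ℕ → ℝ := fun t => ‖w (t + 1) - ws t‖ ^ 2 with hc
  -- per-step bound
  have hstep : ∀ t ∈ Finset.Icc 1 T, f t (w t) - f t (ws t) ≤ 2 * L * (b t - c t) := by
    intro t ht
    exact step_bound hL (hgrad t ht) (hconv t ht) (hsmooth t ht) hΩconv
      (hwsΩ t ht) (hprojmem t ht) (hvanish t ht) (hproj t ht)
  have hsum1 : ∑ t ∈ Finset.Icc 1 T, (f t (w t) - f t (ws t))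
      ≤ 2 * L * ∑ t ∈ Finset.Icc 1 T, (b t - c t) := by
    rw [Finset.mul_sum]
    exact Finset.sum_le_sum hstep
  have hshift := abel_shift b c T hT
  -- bound the pieces
  have hb1 : b 1 ≤ r ^ 2 := by
    have := hdiam (w 1) hw1 (ws 1) (hwsΩ 1 (by simp [hT]; omega))
    calc b 1 = ‖w 1 - ws 1‖ ^ 2 := rfl
      _ ≤ r ^ 2 := by nlinarith [norm_nonneg (w 1 - ws 1)]
  have hcT : 0 ≤ c T := sq_nonneg _
  have hcross : ∀ t ∈ Finset.Icc 1 (T - 1),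
      b (t + 1) - c t ≤ 2 * r * ‖ws t - ws (t + 1)‖ := by
    intro t ht
    simp only [Finset.mem_Icc] at ht
    have ht1 : t ∈ Finset.Icc 1 T := by simp; omega
    have ht2 : t + 1 ∈ Finset.Icc 1 T := by simp; omega
    have hyΩ : w (t + 1) ∈ Ω := hprojmem t ht1
    have ha : ‖w (t + 1) - ws (t + 1)‖ ≤ r := hdiam _ hyΩ _ (hwsΩ _ ht2)
    have hb' : ‖w (t + 1) - ws t‖ ≤ r := hdiam _ hyΩ _ (hwsΩ _ ht1)
    have hdiff : ‖w (t + 1) - ws (t + 1)‖ - ‖w (t + 1) - ws t‖ ≤ ‖ws t - ws (t + 1)‖ := by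
      have := norm_sub_norm_le (w (t + 1) - ws (t + 1)) (w (t + 1) - ws t)
      have he : (w (t + 1) - ws (t + 1)) - (w (t + 1) - ws t) = ws t - ws (t + 1) := by abel
      rw [he] at this
      exact this
    have hnn := norm_nonneg (w (t + 1) - ws (t + 1))
    have hnn' := norm_nonneg (w (t + 1) - ws t)
    have hnn'' := norm_nonneg (ws t - ws (t + 1))
    show ‖w (t + 1) - ws (t + 1)‖ ^ 2 - ‖w (t + 1) - ws t‖ ^ 2 ≤ 2 * r * ‖ws t - ws (t + 1)‖
    nlinarith [hdiff, ha, hb', hnn, hnn', hnn'']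
  have hsum2 : ∑ t ∈ Finset.Icc 1 (T - 1), (b (t + 1) - c t)
      ≤ 2 * r * ∑ t ∈ Finset.Icc 1 (T - 1), ‖ws t - ws (t + 1)‖ := by
    rw [Finset.mul_sum]
    exact Finset.sum_le_sum hcross
  have hfinal : ∑ t ∈ Finset.Icc 1 T, (b t - c t)
      ≤ r ^ 2 + 2 * r * ∑ t ∈ Finset.Icc 1 (T - 1), ‖ws t - ws (t + 1)‖ := by
    rw [hshift]; linarith
  calc ∑ t ∈ Finset.Icc 1 T, (f t (w t) - f t (ws t))
      ≤ 2 * L * ∑ t ∈ Finset.Icc 1 T, (b t - c t) := hsum1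
    _ ≤ 2 * L * (r ^ 2 + 2 * r * ∑ t ∈ Finset.Icc 1 (T - 1), ‖ws t - ws (t + 1)‖) :=
        mul_le_mul_of_nonneg_left hfinal (by positivity)
end
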